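/- Let y, β ∈ ℝ^{p×m} and let γ ∈ ℝ^{p×p} be symmetric with γ + y yᵀ positive definite. Then the Lagrange dual function of the orthogonal Procrustes problem satisfies the closed form inf_{R ∈ ℝ^{p×p}} [ ‖R y − β‖²_F + tr{γ (Rᵀ R − I)} ] = tr(βᵀβ) − tr(γ) − tr{ y βᵀ β yᵀ (γ + y yᵀ)⁻¹ }. -/

import Mathlib

open Matrix

lemma trace_nonneg_of_posSemidef {n : Type*} [Fintype n] {A : Matrix n n ℝ}
    (hA : A.PosSemidef) : 0 ≤ A.trace := by
  classical
  rw [Matrix.trace]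
  refine Finset.sum_nonneg fun i _ => ?_
  exact hA.diag_nonneg

/-- Closed form of the Lagrange dual function of the orthogonal Procrustes
problem: for symmetric `γ` with `γ + yyᵀ` positive definite,
`inf_R [‖Ry − β‖²_F + tr{γ(RᵀR − I)}] = tr(βᵀβ) − tr(γ) − tr{yβᵀβyᵀ(γ + yyᵀ)⁻¹}`,
where `‖M‖²_F = tr(MᵀM)` and the infimum is over all `R ∈ ℝ^{p×p}`. -/
theorem procrustes_dual_closed_form
    {p m : ℕ}
    (y β : Matrix (Fin p) (Fin m) ℝ)
    (γ : Matrix (Fin p) (Fin p) ℝ)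
    (hγ : γ.IsSymm)
    (hpd : (γ + y * yᵀ).PosDef)
    (L : Matrix (Fin p) (Fin p) ℝ → ℝ)
    (hL : ∀ R, L R = ((R * y - β)ᵀ * (R * y - β)).trace
      + (γ * (Rᵀ * R - 1)).trace) :
    IsGLB (Set.range L)
      ((βᵀ * β).trace - γ.trace
        - (y * βᵀ * β * yᵀ * (γ + y * yᵀ)⁻¹).trace) := by
  classical
  set A : Matrix (Fin p) (Fin p) ℝ := γ + y * yᵀ with hAdef
  have hAs : Aᵀ = A := by
    simp [hAdef, transpose_add, transpose_mul, hγ.eq]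
  have hdet : IsUnit A.det := (Matrix.isUnit_iff_isUnit_det A).1 hpd.isUnit
  have h1 : A * A⁻¹ = 1 := Matrix.mul_nonsing_inv A hdet
  have h2 : A⁻¹ * A = 1 := Matrix.nonsing_inv_mul A hdet
  have hAinvT : A⁻¹ᵀ = A⁻¹ := by rw [Matrix.transpose_nonsing_inv, hAs]
  set C : Matrix (Fin p) (Fin p) ℝ := β * yᵀ * A⁻¹ with hCdef
  have hCt : Cᵀ = A⁻¹ * (y * βᵀ) := by
    simp [hCdef, transpose_mul, hAinvT, mul_assoc]
  have hACt : A * Cᵀ = y * βᵀ := by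
    rw [hCt, ← mul_assoc, h1, one_mul]
  have hCA : C * A = β * yᵀ := by
    rw [hCdef, mul_assoc, h2, mul_one]
  set T : ℝ := (βᵀ * β).trace - γ.trace - (y * βᵀ * β * yᵀ * A⁻¹).trace with hT
  have hCACt : (C * A * Cᵀ).trace = (y * βᵀ * β * yᵀ * A⁻¹).trace := by
    rw [hCA, hCt,
      show β * yᵀ * (A⁻¹ * (y * βᵀ)) = β * (yᵀ * (A⁻¹ * (y * βᵀ))) from Matrix.mul_assoc _ _ _,
      Matrix.trace_mul_comm,
      show yᵀ * (A⁻¹ * (y * βᵀ)) * β = yᵀ * (A⁻¹ * (y * (βᵀ * β))) by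
        simp only [Matrix.mul_assoc],
      Matrix.trace_mul_comm,
      show A⁻¹ * (y * (βᵀ * β)) * yᵀ = A⁻¹ * (y * βᵀ * β * yᵀ) by
        simp only [Matrix.mul_assoc],
      Matrix.trace_mul_comm]
  have key : ∀ R, L R = ((R - C) * A * (R - C)ᵀ).trace + T := by
    intro R
    rw [hL R]
    have expand : (R - C) * A * (R - C)ᵀ
        = R * A * Rᵀ - R * (A * Cᵀ) - (C * A) * Rᵀ + C * A * Cᵀ := by
      simp only [transpose_sub]
      noncomm_ring
    rw [expand, Matrix.trace_add, Matrix.trace_sub, Matrix.trace_sub, hCACt, hACt, hCA, hT]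
    have h1' : (R * γ * Rᵀ).trace = (γ * (Rᵀ * R)).trace := by
      rw [Matrix.trace_mul_comm,
        show Rᵀ * (R * γ) = Rᵀ * R * γ from (Matrix.mul_assoc _ _ _).symm,
        Matrix.trace_mul_comm]
    have h2' : (R * (y * yᵀ) * Rᵀ).trace = ((R * y)ᵀ * (R * y)).trace := by
      rw [show R * (y * yᵀ) * Rᵀ = R * y * (yᵀ * Rᵀ) by simp only [Matrix.mul_assoc],
        Matrix.trace_mul_comm, transpose_mul]
    have ha : (R * A * Rᵀ).trace
        = (γ * (Rᵀ * R)).trace + ((R * y)ᵀ * (R * y)).trace := by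
      rw [hAdef, mul_add, add_mul, Matrix.trace_add, h1', h2']
    have hb : (R * (y * βᵀ)).trace = (βᵀ * (R * y)).trace := by
      rw [show R * (y * βᵀ) = R * y * βᵀ from (Matrix.mul_assoc _ _ _).symm,
        Matrix.trace_mul_comm]
    have hc : (β * yᵀ * Rᵀ).trace = ((R * y)ᵀ * β).trace := by
      rw [show β * yᵀ * Rᵀ = β * (yᵀ * Rᵀ) from Matrix.mul_assoc _ _ _,
        Matrix.trace_mul_comm, transpose_mul]
    simp only [transpose_sub, Matrix.sub_mul, Matrix.mul_sub, sub_mul, mul_sub, Matrix.mul_one, mul_one,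
      Matrix.trace_sub, Matrix.trace_add]
    linear_combination hb + hc - ha
  have hmin : IsLeast (Set.range L) (0 + T) := by
    constructor
    · exact ⟨C, by rw [key C]; simp⟩
    · rintro x ⟨R, rfl⟩
      rw [key R]
      have hps : ((R - C) * A * (R - C)ᵀ).PosSemidef := by
        have := hpd.posSemidef.mul_mul_conjTranspose_same (R - C)
        simpa using this
      have := trace_nonneg_of_posSemidef hps
      linarith
  have := hmin.isGLB
  simpa using this
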